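/- Let G be a graph on n vertices. Then the binomial edge ideal J(G) in R = k[x_1,...,x_n,y_1,...,y_n] satisfies J(G) = ⋂_{S ∈ C(G)} P_S(G), and this is the (minimal) primary decomposition of J(G); in particular J(G) is a radical ideal. -/

import Mathlib

open MvPolynomial

/-- `x_i` in `R = k[x_1,…,x_n,y_1,…,y_n]`. -/
noncomputable def xv (k : Type) [Field k] (n : ℕ) (i : Fin n) :
    MvPolynomial (Fin n ⊕ Fin n) k := X (Sum.inl i)

/-- `y_i` in `R = k[x_1,…,x_n,y_1,…,y_n]`. -/
noncomputable def yv (k : Type) [Field k] (n : ℕ) (i : Fin n) :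
    MvPolynomial (Fin n ⊕ Fin n) k := X (Sum.inr i)

/-- `δ_{ij} = x_i y_j - x_j y_i`. -/
noncomputable def delta (k : Type) [Field k] (n : ℕ) (i j : Fin n) :
    MvPolynomial (Fin n ⊕ Fin n) k :=
  xv k n i * yv k n j - xv k n j * yv k n i

/-- The binomial edge ideal `J(G) = (δ_{ij} : {i,j} ∈ E(G))`. -/
noncomputable def JG (k : Type) [Field k] (n : ℕ) (G : SimpleGraph (Fin n)) :
    Ideal (MvPolynomial (Fin n ⊕ Fin n) k) :=
  Ideal.span {f | ∃ i j, G.Adj i j ∧ f = delta k n i j}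

/-- The number of connected components of the induced subgraph of `G` on `A`. -/
noncomputable def comps {n : ℕ} (G : SimpleGraph (Fin n)) (A : Set (Fin n)) : ℕ :=
  Nat.card ((G.induce A).ConnectedComponent)

/-- `C(G)`. -/
def cutSets {n : ℕ} (G : SimpleGraph (Fin n)) : Set (Set (Fin n)) :=
  {S | S = ∅ ∨ ∀ w ∈ S, comps G (S \ {w})ᶜ < comps G Sᶜ}

/-- `P_S(G)`. -/
noncomputable def PS (k : Type) [Field k] (n : ℕ) (G : SimpleGraph (Fin n))
    (S : Set (Fin n)) : Ideal (MvPolynomial (Fin n ⊕ Fin n) k) :=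
  Ideal.span ({f | ∃ i ∈ S, f = xv k n i ∨ f = yv k n i} ∪
    {f | ∃ (i j : Fin n) (hi : i ∈ Sᶜ) (hj : j ∈ Sᶜ), i ≠ j ∧
      (G.induce Sᶜ).Reachable ⟨i, hi⟩ ⟨j, hj⟩ ∧ f = delta k n i j})


noncomputable section
namespace BEI
attribute [local instance] Classical.propDecidable
variable (k : Type) [Field k]
abbrev R (V : Type) := MvPolynomial (V ⊕ V) k
variable {V : Type}
def xx (i : V) : R k V := X (Sum.inl i)
def yy (i : V) : R k V := X (Sum.inr i)
def dd (i j : V) : R k V := xx k i * yy k j - xx k j * yy k i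
def PP (G : SimpleGraph V) (S : Set V) : Ideal (R k V) :=
  Ideal.span ({f | ∃ i ∈ S, f = xx k i ∨ f = yy k i} ∪
    {f | ∃ (i j : V) (hi : i ∈ Sᶜ) (hj : j ∈ Sᶜ), i ≠ j ∧
      (G.induce Sᶜ).Reachable ⟨i, hi⟩ ⟨j, hj⟩ ∧ f = dd k i j})
def JJ (G : SimpleGraph V) : Ideal (R k V) :=
  Ideal.span {f | ∃ i j, G.Adj i j ∧ f = dd k i j}

variable {k}
lemma xx_mem_PP {G : SimpleGraph V} {S : Set V} {i : V} (hi : i ∈ S) :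
    xx k i ∈ PP k G S := Ideal.subset_span (Or.inl ⟨i, hi, Or.inl rfl⟩)
lemma yy_mem_PP {G : SimpleGraph V} {S : Set V} {i : V} (hi : i ∈ S) :
    yy k i ∈ PP k G S := Ideal.subset_span (Or.inl ⟨i, hi, Or.inr rfl⟩)
lemma dd_mem_PP_reach {G : SimpleGraph V} {S : Set V} {i j : V} (hi : i ∈ Sᶜ) (hj : j ∈ Sᶜ)
    (hne : i ≠ j) (h : (G.induce Sᶜ).Reachable ⟨i, hi⟩ ⟨j, hj⟩) :
    dd k i j ∈ PP k G S := Ideal.subset_span (Or.inr ⟨i, j, hi, hj, hne, h, rfl⟩)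

lemma dd_mem_PP_left {G : SimpleGraph V} {S : Set V} {i j : V} (hi : i ∈ S) :
    dd k i j ∈ PP k G S := by
  have h1 : xx k i ∈ PP k G S := xx_mem_PP hi
  have h2 : yy k i ∈ PP k G S := yy_mem_PP hi
  have : dd k i j = yy k j * xx k i - xx k j * yy k i := by rw [dd]; ring
  rw [this]
  exact Ideal.sub_mem _ (Ideal.mul_mem_left _ _ h1) (Ideal.mul_mem_left _ _ h2)

lemma dd_mem_PP_right {G : SimpleGraph V} {S : Set V} {i j : V} (hj : j ∈ S) :
    dd k i j ∈ PP k G S := by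
  have h1 : xx k j ∈ PP k G S := xx_mem_PP hj
  have h2 : yy k j ∈ PP k G S := yy_mem_PP hj
  have : dd k i j = xx k i * yy k j - yy k i * xx k j := by rw [dd]; ring
  rw [this]
  exact Ideal.sub_mem _ (Ideal.mul_mem_left _ _ h2) (Ideal.mul_mem_left _ _ h1)

lemma dd_mem_JJ {G : SimpleGraph V} {i j : V} (h : G.Adj i j) : dd k i j ∈ JJ k G :=
  Ideal.subset_span ⟨i, j, h, rfl⟩

lemma JJ_le_PP (G : SimpleGraph V) (S : Set V) : JJ k G ≤ PP k G S := by
  rw [JJ, Ideal.span_le]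
  rintro f ⟨i, j, hadj, rfl⟩
  by_cases hi : i ∈ S
  · exact dd_mem_PP_left hi
  · by_cases hj : j ∈ S
    · exact dd_mem_PP_right hj
    · exact dd_mem_PP_reach hi hj hadj.ne (SimpleGraph.Adj.reachable (by exact hadj))

section Prime

variable (G : SimpleGraph V) (S : Set V)

abbrev CC := (G.induce Sᶜ).ConnectedComponent

def cpt (i : V) (h : i ∈ Sᶜ) : CC G S := (G.induce Sᶜ).connectedComponentMk ⟨i, h⟩

variable (k) in
def Fv : V ⊕ V → MvPolynomial (V ⊕ (CC G S ⊕ CC G S)) k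
  | Sum.inl i =>
      if h : i ∈ Sᶜ then X (Sum.inl i) * X (Sum.inr (Sum.inl (cpt G S i h))) else 0
  | Sum.inr i =>
      if h : i ∈ Sᶜ then X (Sum.inl i) * X (Sum.inr (Sum.inr (cpt G S i h))) else 0

variable (k) in
def phi : R k V →ₐ[k] MvPolynomial (V ⊕ (CC G S ⊕ CC G S)) k := aeval (Fv k G S)

lemma phi_xx (i : V) : phi k G S (xx k i) =
    if h : i ∈ Sᶜ then X (Sum.inl i) * X (Sum.inr (Sum.inl (cpt G S i h))) else 0 := by
  simp [phi, xx, Fv]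

lemma phi_yy (i : V) : phi k G S (yy k i) =
    if h : i ∈ Sᶜ then X (Sum.inl i) * X (Sum.inr (Sum.inr (cpt G S i h))) else 0 := by
  simp [phi, yy, Fv]

lemma PP_le_ker : PP k G S ≤ RingHom.ker (phi k G S) := by
  rw [PP, Ideal.span_le]
  rintro f (⟨i, hi, rfl | rfl⟩ | ⟨i, j, hi, hj, hne, hr, rfl⟩) <;>
    rw [SetLike.mem_coe, RingHom.mem_ker]
  · rw [phi_xx, dif_neg (fun h => h hi)]
  · rw [phi_yy, dif_neg (fun h => h hi)]
  · have hc : cpt G S i hi = cpt G S j hj := SimpleGraph.ConnectedComponent.sound hr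
    simp only [dd, map_sub, map_mul, phi_xx, phi_yy, dif_pos hi, dif_pos hj, hc]
    ring


section HardDirection

lemma X_mul_X {σ : Type} (a b : σ) :
    (X a * X b : MvPolynomial σ k) = monomial (Finsupp.single a 1 + Finsupp.single b 1) 1 := by
  rw [show (X a : MvPolynomial σ k) = monomial (Finsupp.single a 1) 1 from rfl,
      show (X b : MvPolynomial σ k) = monomial (Finsupp.single b 1) 1 from rfl,
      monomial_mul, one_mul]

variable [LinearOrder V]

lemma prod_monomial {α σ : Type} (s : Finset α) (g : α → (σ →₀ ℕ)) :
    (∏ v ∈ s, (monomial (g v) (1 : k) : MvPolynomial σ k)) = monomial (∑ v ∈ s, g v) 1 := by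
  classical
  induction s using Finset.induction with
  | empty => simp
  | insert _ _ h ih => rw [Finset.prod_insert h, ih, monomial_mul, one_mul, Finset.sum_insert h]

def Std (m : V ⊕ V →₀ ℕ) : Prop :=
  (∀ i ∈ S, m (Sum.inl i) = 0 ∧ m (Sum.inr i) = 0) ∧
  ∀ i j : V, ∀ _hlt : i < j, ∀ (hi : i ∈ Sᶜ) (hj : j ∈ Sᶜ),
    (G.induce Sᶜ).Reachable ⟨i, hi⟩ ⟨j, hj⟩ → m (Sum.inl j) = 0 ∨ m (Sum.inr i) = 0

def ev : V ⊕ V → (V ⊕ (CC G S ⊕ CC G S) →₀ ℕ)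
  | Sum.inl i => if h : i ∈ Sᶜ then
      Finsupp.single (Sum.inl i) 1 + Finsupp.single (Sum.inr (Sum.inl (cpt G S i h))) 1 else 0
  | Sum.inr i => if h : i ∈ Sᶜ then
      Finsupp.single (Sum.inl i) 1 + Finsupp.single (Sum.inr (Sum.inr (cpt G S i h))) 1 else 0

def EE (m : V ⊕ V →₀ ℕ) : V ⊕ (CC G S ⊕ CC G S) →₀ ℕ := m.sum fun v t => t • ev G S v

lemma EE_single (v : V ⊕ V) (t : ℕ) : EE G S (Finsupp.single v t) = t • ev G S v :=
  Finsupp.sum_single_index (zero_smul _ _)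

lemma EE_add (m m' : V ⊕ V →₀ ℕ) : EE G S (m + m') = EE G S m + EE G S m' :=
  Finsupp.sum_add_index' (fun v => zero_smul _ _) (fun v a b => add_smul a b _)

lemma EE_apply_inl (m : V ⊕ V →₀ ℕ) (i : V) (hi : i ∈ Sᶜ) :
    EE G S m (Sum.inl i) = m (Sum.inl i) + m (Sum.inr i) := by
  induction m using Finsupp.induction with
  | zero => simp [EE]
  | single_add v t f hvf ht ih =>
    have hv : (t • ev G S v) (Sum.inl i) =
        Finsupp.single v t (Sum.inl i) + Finsupp.single v t (Sum.inr i) := by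
      rcases v with l | l
      · by_cases hl : l = i
        · subst hl
          rw [ev, dif_pos hi]
          simp [Finsupp.single_apply]
        · rw [ev]
          split
          · simp [Finsupp.single_apply, hl, Ne.symm hl]
          · simp [Finsupp.single_apply, hl, Ne.symm hl]
      · by_cases hl : l = i
        · subst hl
          rw [ev, dif_pos hi]
          simp [Finsupp.single_apply]
        · rw [ev]
          split
          · simp [Finsupp.single_apply, hl, Ne.symm hl]
          · simp [Finsupp.single_apply, hl, Ne.symm hl]
    rw [show Finsupp.single v t + f = (Finsupp.single v t) + f from rfl, EE_add, EE_single]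
    simp only [Finsupp.add_apply]
    omega

lemma EE_apply_cc [Fintype V] (m : V ⊕ V →₀ ℕ) (c : CC G S) :
    EE G S m (Sum.inr (Sum.inl c)) =
      ∑ j ∈ Finset.univ.filter (fun j => ∃ h : j ∈ Sᶜ, cpt G S j h = c), m (Sum.inl j) := by
  induction m using Finsupp.induction with
  | zero => simp [EE]
  | single_add v t f hvf ht ih =>
    rw [EE_add, EE_single]
    simp only [Finsupp.add_apply]
    rw [ih]
    have hv : (t • ev G S v) (Sum.inr (Sum.inl c)) =
        ∑ j ∈ Finset.univ.filter (fun j => ∃ h : j ∈ Sᶜ, cpt G S j h = c),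
          Finsupp.single v t (Sum.inl j) := by
      rcases v with l | l
      · have : ∀ j, Finsupp.single (Sum.inl l : V ⊕ V) t (Sum.inl j)
            = if j = l then t else 0 := by
          intro j
          rw [Finsupp.single_apply]
          by_cases h : l = j <;> simp [h, eq_comm]
        rw [Finset.sum_congr rfl fun j _ => this j, Finset.sum_ite_eq' _ l fun _ => t]
        by_cases hl : l ∈ Sᶜ
        · rw [ev, dif_pos hl]
          by_cases hc : cpt G S l hl = c
          · rw [if_pos (by simp; exact ⟨hl, hc⟩)]
            simp [Finsupp.single_apply, hc]
          · rw [if_neg (by simp; intro h; exact hc)]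
            have : (Sum.inr (Sum.inl (cpt G S l hl)) : V ⊕ (CC G S ⊕ CC G S)) ≠
                Sum.inr (Sum.inl c) := by simp [hc]
            simp [Finsupp.single_apply, this, hc]
        · rw [ev, dif_neg hl, if_neg (by simp; intro h; exact absurd h hl)]
          simp
      · have : ∀ j, Finsupp.single (Sum.inr l : V ⊕ V) t (Sum.inl j) = 0 := by
          intro j; simp [Finsupp.single_apply]
        rw [Finset.sum_congr rfl fun j _ => this j]
        rw [ev]
        split <;> simp [Finsupp.single_apply]
    rw [hv]
    exact (Finset.sum_add_distrib).symm


lemma phi_monomial (m : V ⊕ V →₀ ℕ) (c : k)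
    (hm : ∀ i ∈ S, m (Sum.inl i) = 0 ∧ m (Sum.inr i) = 0) :
    phi k G S (monomial m c) = monomial (EE G S m) c := by
  rw [phi, aeval_monomial]
  have h1 : ∀ v ∈ m.support, Fv k G S v = monomial (ev G S v) 1 := by
    intro v hv
    have hne : m v ≠ 0 := Finsupp.mem_support_iff.1 hv
    rcases v with i | i
    · have hi : i ∈ Sᶜ := by
        intro hiS
        exact hne (hm i hiS).1
      rw [Fv, dif_pos hi, ev, dif_pos hi, X_mul_X]
    · have hi : i ∈ Sᶜ := by
        intro hiS
        exact hne (hm i hiS).2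
      rw [Fv, dif_pos hi, ev, dif_pos hi, X_mul_X]
  have h2 : (m.prod fun v t => Fv k G S v ^ t) = monomial (EE G S m) 1 := by
    rw [Finsupp.prod]
    calc ∏ v ∈ m.support, Fv k G S v ^ m v
        = ∏ v ∈ m.support, monomial (m v • ev G S v) 1 := by
          refine Finset.prod_congr rfl fun v hv => ?_
          rw [h1 v hv, monomial_pow, one_pow]
      _ = monomial (∑ v ∈ m.support, m v • ev G S v) 1 := prod_monomial _ _
      _ = monomial (EE G S m) 1 := rfl
  rw [h2, algebraMap_eq, C_mul_monomial, mul_one]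

lemma EE_inj_aux [Fintype V] {m m' : V ⊕ V →₀ ℕ} (hm : Std G S m) (hm' : Std G S m')
    (h : EE G S m = EE G S m') {i : V} (hlt : m' (Sum.inl i) < m (Sum.inl i)) : False := by
  have hi : i ∈ Sᶜ := by
    intro hiS
    have := (hm.1 i hiS).1
    omega
  set c := cpt G S i hi with hc
  set F := Finset.univ.filter (fun j => ∃ h : j ∈ Sᶜ, cpt G S j h = c) with hF
  have hsum : ∑ j ∈ F, m (Sum.inl j) = ∑ j ∈ F, m' (Sum.inl j) := by
    rw [← EE_apply_cc, ← EE_apply_cc, h]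
  have hiF : i ∈ F := by
    rw [hF, Finset.mem_filter]
    exact ⟨Finset.mem_univ _, ⟨hi, rfl⟩⟩
  have hex : ∃ j ∈ F, m (Sum.inl j) < m' (Sum.inl j) := by
    by_contra hcon
    push_neg at hcon
    have : ∑ j ∈ F, m' (Sum.inl j) < ∑ j ∈ F, m (Sum.inl j) :=
      Finset.sum_lt_sum hcon ⟨i, hiF, hlt⟩
    omega
  obtain ⟨j, hjF, hj⟩ := hex
  obtain ⟨hjc, hcpt⟩ : ∃ h : j ∈ Sᶜ, cpt G S j h = c := (Finset.mem_filter.1 hjF).2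
  have hr : (G.induce Sᶜ).Reachable ⟨i, hi⟩ ⟨j, hjc⟩ :=
    (SimpleGraph.ConnectedComponent.eq.1 hcpt).symm
  have key_i : m (Sum.inl i) + m (Sum.inr i) = m' (Sum.inl i) + m' (Sum.inr i) := by
    rw [← EE_apply_inl G S m i hi, ← EE_apply_inl G S m' i hi, h]
  have key_j : m (Sum.inl j) + m (Sum.inr j) = m' (Sum.inl j) + m' (Sum.inr j) := by
    rw [← EE_apply_inl G S m j hjc, ← EE_apply_inl G S m' j hjc, h]
  have h1 : 0 < m (Sum.inr j) := by omega
  have h2 : 0 < m' (Sum.inr i) := by omega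
  have hij : ¬ j < i := by
    intro hlt'
    rcases hm.2 j i hlt' hjc hi hr.symm with h0 | h0 <;> omega
  have hji : ¬ i < j := by
    intro hlt'
    rcases hm'.2 i j hlt' hi hjc hr with h0 | h0 <;> omega
  have : i = j := le_antisymm (not_lt.1 hij) (not_lt.1 hji)
  subst this
  omega

lemma EE_inj [Fintype V] {m m' : V ⊕ V →₀ ℕ} (hm : Std G S m) (hm' : Std G S m')
    (h : EE G S m = EE G S m') : m = m' := by
  have hinl : ∀ i, m (Sum.inl i) = m' (Sum.inl i) := by
    intro i
    rcases lt_trichotomy (m (Sum.inl i)) (m' (Sum.inl i)) with hlt | he | hlt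
    · exact (EE_inj_aux G S hm' hm h.symm hlt).elim
    · exact he
    · exact (EE_inj_aux G S hm hm' h hlt).elim
  have hinr : ∀ i, m (Sum.inr i) = m' (Sum.inr i) := by
    intro i
    by_cases hi : i ∈ Sᶜ
    · have k1 := EE_apply_inl G S m i hi
      have k2 := EE_apply_inl G S m' i hi
      rw [h] at k1
      have := hinl i
      omega
    · have hiS : i ∈ S := not_not.1 hi
      rw [(hm.1 i hiS).2, (hm'.1 i hiS).2]
  ext v
  rcases v with i | i
  · exact hinl i
  · exact hinr i


section Span

variable [Fintype V]

def rnk (i : V) : ℕ := (Finset.univ.filter (· < i)).card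

lemma rnk_lt {i j : V} (h : i < j) : rnk i < rnk j := by
  apply Finset.card_lt_card
  constructor
  · intro l hl
    rw [Finset.mem_filter] at hl ⊢
    exact ⟨hl.1, lt_trans hl.2 h⟩
  · intro hsub
    have : i ∈ Finset.univ.filter (· < j) := by
      rw [Finset.mem_filter]; exact ⟨Finset.mem_univ _, h⟩
    have := hsub this
    rw [Finset.mem_filter] at this
    exact lt_irrefl i this.2

def wt (m : V ⊕ V →₀ ℕ) : ℕ :=
  m.sum fun v t => match v with | Sum.inl l => t * rnk l | Sum.inr _ => 0

lemma wt_add (m m' : V ⊕ V →₀ ℕ) : wt (m + m') = wt m + wt m' := by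
  refine Finsupp.sum_add_index' ?_ ?_
  · rintro (l | l) <;> simp
  · rintro (l | l) a b <;> simp [add_mul]

lemma wt_single_inl (l : V) (t : ℕ) : wt (Finsupp.single (Sum.inl l : V ⊕ V) t) = t * rnk l :=
  Finsupp.sum_single_index (by simp)

lemma wt_single_inr (l : V) (t : ℕ) : wt (Finsupp.single (Sum.inr l : V ⊕ V) t) = 0 :=
  Finsupp.sum_single_index (by simp)

variable (k)

def StdSpan : Submodule k (R k V) :=
  Submodule.span k {f | ∃ m, Std G S m ∧ f = monomial m 1}

variable {k}

lemma sub_single_add (m : V ⊕ V →₀ ℕ) (v : V ⊕ V) (h : m v ≠ 0) :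
    (m - Finsupp.single v 1) + Finsupp.single v 1 = m := by
  ext w
  simp only [Finsupp.add_apply, Finsupp.tsub_apply, Finsupp.single_apply]
  by_cases hw : v = w
  · subst hw
    simp
    omega
  · rw [if_neg hw]
    omega

lemma monomial_factor (v : V ⊕ V) (m : V ⊕ V →₀ ℕ) (c : k) (h : m v ≠ 0) :
    (monomial m c : R k V) = monomial (m - Finsupp.single v 1) c * X v := by
  rw [show (X v : R k V) = monomial (Finsupp.single v 1) 1 from rfl, monomial_mul, mul_one,
    sub_single_add m v h]

lemma monomial_mem (N : ℕ) : ∀ (m : V ⊕ V →₀ ℕ) (c : k), wt m ≤ N →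
    (monomial m c : R k V) ∈ (PP k G S).restrictScalars k ⊔ StdSpan k G S := by
  induction N using Nat.strong_induction_on with
  | _ N ih =>
  intro m c hw
  by_cases hS1 : ∃ i ∈ S, m (Sum.inl i) ≠ 0 ∨ m (Sum.inr i) ≠ 0
  · obtain ⟨i, hiS, hi⟩ := hS1
    rcases hi with hi | hi
    · rw [monomial_factor (Sum.inl i) m c hi]
      exact Submodule.mem_sup_left
        (Ideal.mul_mem_left _ _ (xx_mem_PP hiS) : _ ∈ (PP k G S).restrictScalars k)
    · rw [monomial_factor (Sum.inr i) m c hi]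
      exact Submodule.mem_sup_left
        (Ideal.mul_mem_left _ _ (yy_mem_PP hiS) : _ ∈ (PP k G S).restrictScalars k)
  · push_neg at hS1
    by_cases hstd : Std G S m
    · have : (monomial m c : R k V) = c • monomial m 1 := by
        rw [smul_monomial, smul_eq_mul, mul_one]
      rw [this]
      exact Submodule.mem_sup_right
        (Submodule.smul_mem _ c (Submodule.subset_span ⟨m, hstd, rfl⟩))
    · have hB : ¬ (∀ i j : V, ∀ _hlt : i < j, ∀ (hi : i ∈ Sᶜ) (hj : j ∈ Sᶜ),
          (G.induce Sᶜ).Reachable ⟨i, hi⟩ ⟨j, hj⟩ →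
            m (Sum.inl j) = 0 ∨ m (Sum.inr i) = 0) := by
        intro hB
        exact hstd ⟨hS1, hB⟩
      push_neg at hB
      obtain ⟨i, j, hij, hi, hj, hr, hmj, hmi⟩ := hB
      set m' := m - Finsupp.single (Sum.inl j) 1 - Finsupp.single (Sum.inr i) 1 with hm'
      have hmj' : ((m - Finsupp.single (Sum.inl j) 1 : V ⊕ V →₀ ℕ)) (Sum.inr i) ≠ 0 := by
        simp only [Finsupp.tsub_apply, Finsupp.single_apply, if_neg (by simp :
          (Sum.inl j : V ⊕ V) ≠ Sum.inr i)]
        omega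
      have hmeq : m = m' + Finsupp.single (Sum.inr i) 1 + Finsupp.single (Sum.inl j) 1 := by
        rw [hm', sub_single_add _ _ hmj', sub_single_add _ _ hmj]
      set m'' := m' + Finsupp.single (Sum.inl i) 1 + Finsupp.single (Sum.inr j) 1 with hm''
      have key : (monomial m c : R k V) =
          monomial m'' c - dd k i j * monomial m' c := by
        have e1 : ∀ (mm : V ⊕ V →₀ ℕ) (v : V ⊕ V),
            (monomial (mm + Finsupp.single v 1) c : R k V) = monomial mm c * X v := by
          intro mm v
          rw [show (X v : R k V) = monomial (Finsupp.single v 1) 1 from rfl, monomial_mul,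
            mul_one]
        rw [hmeq, e1, e1, hm'', e1, e1]
        show monomial m' c * X (Sum.inr i) * X (Sum.inl j) =
          monomial m' c * X (Sum.inl i) * X (Sum.inr j) - dd k i j * monomial m' c
        rw [dd, xx, yy, xx, yy]
        ring
      have hwm : wt m = wt m' + rnk j := by
        rw [hmeq, wt_add, wt_add, wt_single_inr, wt_single_inl, one_mul, add_zero]
      have hwm'' : wt m'' = wt m' + rnk i := by
        rw [hm'', wt_add, wt_add, wt_single_inl, wt_single_inr, one_mul, add_zero]
      have hlt : wt m'' < wt m := by
        rw [hwm, hwm'']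
        exact Nat.add_lt_add_left (rnk_lt hij) _
      rw [key]
      refine Submodule.sub_mem _ ?_ ?_
      · exact ih (wt m'') (lt_of_lt_of_le hlt hw) m'' c le_rfl
      · exact Submodule.mem_sup_left
          (Ideal.mul_mem_right _ _ (dd_mem_PP_reach hi hj (ne_of_lt hij) hr) :
            _ ∈ (PP k G S).restrictScalars k)

lemma top_le_sup (f : R k V) :
    f ∈ (PP k G S).restrictScalars k ⊔ StdSpan k G S := by
  have hmem : (∑ m ∈ f.support, (monomial m (coeff m f) : R k V)) ∈
      (PP k G S).restrictScalars k ⊔ StdSpan k G S :=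
    Submodule.sum_mem _ fun m _ => monomial_mem G S (wt m) m _ le_rfl
  rwa [support_sum_monomial_coeff] at hmem


lemma stdspan_supp {g : R k V} (hg : g ∈ StdSpan k G S) : ∀ m ∈ g.support, Std G S m := by
  refine Submodule.span_induction ?_ ?_ ?_ ?_ hg
  · rintro f ⟨m, hm, rfl⟩ m' hm'
    rw [support_monomial, if_neg (one_ne_zero)] at hm'
    rw [Finset.mem_singleton.1 hm']
    exact hm
  · simp
  · intro x y _ _ hx hy m hm
    rcases Finset.mem_union.1 (support_add hm) with h | h
    · exact hx m h
    · exact hy m h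
  · intro a x _ hx m hm
    exact hx m (support_smul hm)

lemma std_ker_zero {g : R k V} (hg : g ∈ StdSpan k G S) (h0 : phi k G S g = 0) : g = 0 := by
  have hsupp := stdspan_supp G S hg
  have hphi : phi k G S g = ∑ m ∈ g.support, monomial (EE G S m) (coeff m g) := by
    conv_lhs => rw [← support_sum_monomial_coeff g]
    rw [map_sum]
    exact Finset.sum_congr rfl fun m hm => phi_monomial G S m _ ((hsupp m hm).1)
  have key : ∀ m ∈ g.support, coeff m g = 0 := by
    intro m hm
    have h1 : coeff (EE G S m) (phi k G S g) = coeff m g := by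
      rw [hphi, coeff_sum]
      rw [Finset.sum_eq_single_of_mem m hm]
      · rw [coeff_monomial, if_pos rfl]
      · intro b hb hbm
        rw [coeff_monomial, if_neg]
        intro hEE
        exact hbm (EE_inj G S (hsupp b hb) (hsupp m hm) hEE)
    rw [h0, coeff_zero] at h1
    exact h1.symm
  ext m
  by_cases hm : m ∈ g.support
  · rw [key m hm, coeff_zero]
  · rw [MvPolynomial.notMem_support_iff.1 hm, coeff_zero]

theorem ker_le_PP : RingHom.ker (phi k G S) ≤ PP k G S := by
  intro f hf
  obtain ⟨p, hp, g, hgspan, hsum⟩ := Submodule.mem_sup.1 (top_le_sup G S f)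
  have hker : phi k G S f = 0 := hf
  have hpker : phi k G S p = 0 := PP_le_ker G S hp
  have hgker : phi k G S g = 0 := by
    have : f = p + g := hsum.symm
    rw [this, map_add, hpker, zero_add] at hker
    exact hker
  have hg0 := std_ker_zero G S hgspan hgker
  rw [← hsum, hg0, add_zero]
  exact hp

theorem PP_eq_ker : PP k G S = RingHom.ker (phi k G S) :=
  le_antisymm (PP_le_ker G S) (ker_le_PP G S)

theorem PP_isPrime : (PP k G S).IsPrime := by
  rw [PP_eq_ker G S]
  exact RingHom.ker_isPrime _

end Span

end HardDirection

end Prime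

section NotMem

variable (G : SimpleGraph V) (S : Set V)

lemma PP_le_ker_eval (p : V ⊕ V → k)
    (h1 : ∀ i ∈ S, p (Sum.inl i) = 0 ∧ p (Sum.inr i) = 0)
    (h2 : ∀ i j, ∀ (hi : i ∈ Sᶜ) (hj : j ∈ Sᶜ), i ≠ j →
      (G.induce Sᶜ).Reachable ⟨i, hi⟩ ⟨j, hj⟩ →
      p (Sum.inl i) * p (Sum.inr j) - p (Sum.inl j) * p (Sum.inr i) = 0) :
    ∀ f ∈ PP k G S, eval p f = 0 := by
  have hle : PP k G S ≤ RingHom.ker (eval p) := by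
    rw [PP, Ideal.span_le]
    rintro f (⟨i, hi, rfl | rfl⟩ | ⟨i, j, hi, hj, hne, hr, rfl⟩) <;>
      rw [SetLike.mem_coe, RingHom.mem_ker]
    · simpa [xx] using (h1 i hi).1
    · simpa [yy] using (h1 i hi).2
    · simpa [dd, xx, yy] using h2 i j hi hj hne hr
  exact fun f hf => hle hf

lemma xx_not_mem_PP {i : V} (hi : i ∉ S) : xx k i ∉ PP k G S := by
  intro hmem
  have h0 := PP_le_ker_eval G S
    (fun v => Sum.elim (fun l => if l ∈ S then 0 else 1) (fun l => if l ∈ S then 0 else 1) v)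
    (by intro l hl; simp [hl]) ?_ _ hmem
  · rw [xx, eval_X] at h0
    simp only [Sum.elim_inl, if_neg hi] at h0
    exact one_ne_zero h0
  · intro a b ha hb _ _
    simp only [Sum.elim_inl, Sum.elim_inr, if_neg ha, if_neg hb]
    ring

lemma dd_not_mem_PP {i j : V} (hi : i ∈ Sᶜ) (hj : j ∈ Sᶜ) (hne : i ≠ j)
    (hnr : ¬ (G.induce Sᶜ).Reachable ⟨i, hi⟩ ⟨j, hj⟩) : dd k i j ∉ PP k G S := by
  intro hmem
  set p : V ⊕ V → k := fun v => Sum.elim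
    (fun l => if l ∈ S then 0 else 1)
    (fun l => if h : l ∈ Sᶜ then (if cpt G S l h = cpt G S i hi then 1 else 0) else 0) v with hp
  have h0 := PP_le_ker_eval G S p ?_ ?_ _ hmem
  · have hcc : cpt G S j hj ≠ cpt G S i hi :=
      fun hc => hnr ((SimpleGraph.ConnectedComponent.eq.1 hc).symm)
    rw [dd, map_sub, map_mul, map_mul, xx, yy, xx, yy, eval_X, eval_X, eval_X, eval_X] at h0
    simp only [hp, Sum.elim_inl, Sum.elim_inr, if_neg hi, if_neg hj, dif_pos hi, dif_pos hj] at h0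
    rw [if_neg hcc] at h0
    simp at h0
  · intro l hl
    constructor
    · simp [hp, hl]
    · simp only [hp, Sum.elim_inr]
      rw [dif_neg (fun hc => hc hl)]
  · intro a b ha hb hab hr
    have hc : cpt G S a ha = cpt G S b hb := SimpleGraph.ConnectedComponent.sound hr
    simp only [hp, Sum.elim_inl, Sum.elim_inr, if_neg ha, if_neg hb, dif_pos ha, dif_pos hb, hc]
    ring

end NotMem


section Main

variable {G : SimpleGraph V}

variable (k) in
def DD (G : SimpleGraph V) (v : V) : Ideal (R k V) :=
  Ideal.span {g | ∃ a b, G.Adj v a ∧ G.Adj v b ∧ g = dd k a b}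

lemma xx_mul_dd {v a b : V} (ha : G.Adj v a) (hb : G.Adj v b) :
    xx k v * dd k a b ∈ JJ k G := by
  have h1 : dd k v b ∈ JJ k G := dd_mem_JJ hb
  have h2 : dd k a v ∈ JJ k G := dd_mem_JJ ha.symm
  have he : xx k v * dd k a b = xx k a * dd k v b + xx k b * dd k a v := by
    simp only [xx, yy, dd]; ring
  rw [he]
  exact add_mem (Ideal.mul_mem_left _ _ h1) (Ideal.mul_mem_left _ _ h2)

lemma yy_mul_dd {v a b : V} (ha : G.Adj v a) (hb : G.Adj v b) :
    yy k v * dd k a b ∈ JJ k G := by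
  have h1 : dd k v b ∈ JJ k G := dd_mem_JJ hb
  have h2 : dd k a v ∈ JJ k G := dd_mem_JJ ha.symm
  have he : yy k v * dd k a b = yy k a * dd k v b + yy k b * dd k a v := by
    simp only [xx, yy, dd]; ring
  rw [he]
  exact add_mem (Ideal.mul_mem_left _ _ h1) (Ideal.mul_mem_left _ _ h2)

lemma xx_mul_DD {v : V} {q : R k V} (hq : q ∈ DD k G v) : xx k v * q ∈ JJ k G := by
  refine Submodule.span_induction ?_ ?_ ?_ ?_ hq
  · rintro g ⟨a, b, ha, hb, rfl⟩
    exact xx_mul_dd ha hb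
  · simp
  · intro x y _ _ hx hy
    rw [mul_add]
    exact add_mem hx hy
  · intro r x _ hx
    rw [smul_eq_mul, show xx k v * (r * x) = r * (xx k v * x) by ring]
    exact Ideal.mul_mem_left _ _ hx

lemma yy_mul_DD {v : V} {q : R k V} (hq : q ∈ DD k G v) : yy k v * q ∈ JJ k G := by
  refine Submodule.span_induction ?_ ?_ ?_ ?_ hq
  · rintro g ⟨a, b, ha, hb, rfl⟩
    exact yy_mul_dd ha hb
  · simp
  · intro x y _ _ hx hy
    rw [mul_add]
    exact add_mem hx hy
  · intro r x _ hx
    rw [smul_eq_mul, show yy k v * (r * x) = r * (yy k v * x) by ring]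
    exact Ideal.mul_mem_left _ _ hx

lemma span_v_mul_DD {v : V} {p q : R k V} (hp : p ∈ Ideal.span {xx k v, yy k v})
    (hq : q ∈ DD k G v) : p * q ∈ JJ k G := by
  obtain ⟨α, β, hαβ⟩ := Ideal.mem_span_pair.1 hp
  rw [← hαβ, show (α * xx k v + β * yy k v) * q = α * (xx k v * q) + β * (yy k v * q) by ring]
  exact add_mem (Ideal.mul_mem_left _ _ (xx_mul_DD hq)) (Ideal.mul_mem_left _ _ (yy_mul_DD hq))

variable (k) in
def kap (v : V) : R k V →ₐ[k] R k {u : V // u ≠ v} :=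
  aeval (Sum.elim (fun u => if h : u = v then 0 else X (Sum.inl ⟨u, h⟩))
                  (fun u => if h : u = v then 0 else X (Sum.inr ⟨u, h⟩)))

variable (k) in
def iot (v : V) : R k {u : V // u ≠ v} →ₐ[k] R k V :=
  aeval (Sum.elim (fun u => X (Sum.inl u.val)) (fun u => X (Sum.inr u.val)))

variable (k) in
def piv (v : V) : R k V →ₐ[k] R k V := (iot k v).comp (kap k v)

lemma kap_xx (v u : V) : kap k v (xx k u) =
    if h : u = v then 0 else xx k ⟨u, h⟩ := by
  rw [kap, xx, aeval_X]
  rfl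

lemma kap_yy (v u : V) : kap k v (yy k u) =
    if h : u = v then 0 else yy k ⟨u, h⟩ := by
  rw [kap, yy, aeval_X]
  rfl

lemma iot_xx (v : V) (u : {u : V // u ≠ v}) : iot k v (xx k u) = xx k u.val := by
  rw [iot, xx, aeval_X]
  rfl

lemma iot_yy (v : V) (u : {u : V // u ≠ v}) : iot k v (yy k u) = yy k u.val := by
  rw [iot, yy, aeval_X]
  rfl

lemma piv_xx (v u : V) : piv k v (xx k u) = if u = v then 0 else xx k u := by
  rw [piv, AlgHom.comp_apply, kap_xx]
  split_ifs with h
  · rw [map_zero]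
  · rw [iot_xx]

lemma piv_yy (v u : V) : piv k v (yy k u) = if u = v then 0 else yy k u := by
  rw [piv, AlgHom.comp_apply, kap_yy]
  split_ifs with h
  · rw [map_zero]
  · rw [iot_yy]

lemma sub_piv_mem (v : V) (f : R k V) :
    f - piv k v f ∈ Ideal.span {xx k v, yy k v} := by
  induction f using MvPolynomial.induction_on with
  | C a =>
    rw [show (C a : R k V) = algebraMap k _ a from rfl, AlgHom.commutes, sub_self]
    exact zero_mem _
  | add p q hp hq =>
    rw [map_add, show p + q - (piv k v p + piv k v q) = (p - piv k v p) + (q - piv k v q)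
      by ring]
    exact add_mem hp hq
  | mul_X p s hp =>
    have hXs : X s - piv k v (X s) ∈ Ideal.span {xx k v, yy k v} := by
      rcases s with u | u
      · rw [show (X (Sum.inl u) : R k V) = xx k u from rfl, piv_xx]
        split_ifs with h
        · subst h
          rw [sub_zero]
          exact Ideal.subset_span (Set.mem_insert _ _)
        · rw [sub_self]; exact zero_mem _
      · rw [show (X (Sum.inr u) : R k V) = yy k u from rfl, piv_yy]
        split_ifs with h
        · subst h
          rw [sub_zero]
          exact Ideal.subset_span (Set.mem_insert_of_mem _ rfl)
        · rw [sub_self]; exact zero_mem _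
    rw [map_mul, show p * X s - piv k v p * piv k v (X s) =
      (p - piv k v p) * X s + piv k v p * (X s - piv k v (X s)) by ring]
    exact add_mem (Ideal.mul_mem_right _ _ hp) (Ideal.mul_mem_left _ _ hXs)

lemma piv_JJ {v : V} {f : R k V} (hf : f ∈ JJ k G) : piv k v f ∈ JJ k G := by
  have hle : JJ k G ≤ Ideal.comap (piv k v) (JJ k G) := by
    rw [JJ, Ideal.span_le]
    rintro g ⟨i, j, hadj, rfl⟩
    rw [SetLike.mem_coe, Ideal.mem_comap, dd, map_sub, map_mul, map_mul, piv_xx, piv_yy,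
      piv_xx, piv_yy]
    rcases eq_or_ne i v with rfl | hi
    · simp
    · rcases eq_or_ne j v with rfl | hj
      · simp [hi]
      · simp only [if_neg hi, if_neg hj]
        exact dd_mem_JJ hadj
  exact hle hf

lemma pi_DD {v : V} {d : R k V} (hd : d ∈ DD k G v) :
    piv k v d ∈ DD k G v ∧ d - piv k v d ∈ JJ k G := by
  refine Submodule.span_induction ?_ ?_ ?_ ?_ hd
  · rintro g ⟨a, b, ha, hb, rfl⟩
    have hav : a ≠ v := ha.ne'
    have hbv : b ≠ v := hb.ne'
    have hg : piv k v (dd k a b) = dd k a b := by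
      rw [dd, map_sub, map_mul, map_mul, piv_xx, piv_yy, piv_xx, piv_yy,
        if_neg hav, if_neg hbv, if_neg hav, if_neg hbv]
    exact ⟨by rw [hg]; exact Ideal.subset_span ⟨a, b, ha, hb, rfl⟩,
      by rw [hg, sub_self]; exact zero_mem _⟩
  · exact ⟨by rw [map_zero]; exact zero_mem _, by rw [map_zero, sub_zero]; exact zero_mem _⟩
  · rintro x y _ _ ⟨hx1, hx2⟩ ⟨hy1, hy2⟩
    refine ⟨by rw [map_add]; exact add_mem hx1 hy1, ?_⟩
    rw [map_add, show x + y - (piv k v x + piv k v y) = (x - piv k v x) + (y - piv k v y)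
      by ring]
    exact add_mem hx2 hy2
  · rintro r x _ ⟨hx1, hx2⟩
    rw [smul_eq_mul]
    constructor
    · rw [map_mul]
      exact Ideal.mul_mem_left _ _ hx1
    · rw [map_mul, show r * x - piv k v r * piv k v x =
        r * (x - piv k v x) + (r - piv k v r) * piv k v x by ring]
      exact add_mem (Ideal.mul_mem_left _ _ hx2) (span_v_mul_DD (sub_piv_mem v r) hx1)


lemma reach_mono_sets {A B : Set V} (hAB : A ⊆ B) {i j : V} (hi : i ∈ A) (hj : j ∈ A)
    (h : (G.induce A).Reachable ⟨i, hi⟩ ⟨j, hj⟩) :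
    (G.induce B).Reachable ⟨i, hAB hi⟩ ⟨j, hAB hj⟩ :=
  h.map (G.induceHomOfLE hAB).toHom

lemma PP_mono_graph {G G' : SimpleGraph V} (hle : G ≤ G') (S : Set V) :
    PP k G S ≤ PP k G' S := by
  rw [PP, Ideal.span_le]
  rintro f (⟨i, hi, hf⟩ | ⟨i, j, hi, hj, hne, hr, rfl⟩)
  · rcases hf with rfl | rfl
    · exact xx_mem_PP hi
    · exact yy_mem_PP hi
  · refine dd_mem_PP_reach hi hj hne (hr.mono ?_)
    intro a b hab
    exact hle hab

lemma reach_adj {G : SimpleGraph V}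
    (hB : ∀ v a b : V, a ≠ b → G.Adj v a → G.Adj v b → G.Adj a b) {x y : V}
    (h : G.Reachable x y) : x = y ∨ G.Adj x y := by
  obtain ⟨w⟩ := h
  induction w with
  | nil => exact Or.inl rfl
  | @cons u c w huc p ih =>
    rcases ih with rfl | hadj
    · exact Or.inr huc
    · rcases eq_or_ne u w with rfl | hne
      · exact Or.inl rfl
      · exact Or.inr (hB c u w hne huc.symm hadj)

lemma PP_empty_le_JJ {G : SimpleGraph V}
    (hB : ∀ v a b : V, a ≠ b → G.Adj v a → G.Adj v b → G.Adj a b) :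
    PP k G (∅ : Set V) ≤ JJ k G := by
  rw [PP, Ideal.span_le]
  rintro f (⟨i, hi, _⟩ | ⟨i, j, hi, hj, hne, hr, rfl⟩)
  · exact absurd hi (Set.notMem_empty i)
  · have hrG : G.Reachable i j := by
      have := hr.map (⟨Subtype.val, fun {a b} h => h⟩ :
        (G.induce ((∅ : Set V)ᶜ)) →g G)
      exact this
    rcases reach_adj hB hrG with rfl | hadj
    · exact absurd rfl hne
    · exact dd_mem_JJ hadj

lemma kap_PP (v : V) (S' : Set {u : V // u ≠ v}) :
    PP k G (insert v (Subtype.val '' S')) ≤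
      Ideal.comap (kap k v) (PP k (G.comap (Subtype.val : {u : V // u ≠ v} → V)) S') := by
  rw [PP, Ideal.span_le]
  rintro f (⟨i, hi, hf⟩ | ⟨i, j, hi, hj, hne, hr, rfl⟩) <;>
    rw [SetLike.mem_coe, Ideal.mem_comap]
  · rcases hf with rfl | rfl
    · rw [kap_xx]
      rcases Set.mem_insert_iff.1 hi with rfl | ⟨u, hu, rfl⟩
      · rw [dif_pos rfl]; exact zero_mem _
      · rw [dif_neg u.2]
        have : (⟨u.val, u.2⟩ : {w : V // w ≠ v}) = u := Subtype.ext rfl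
        rw [this]
        exact xx_mem_PP hu
    · rw [kap_yy]
      rcases Set.mem_insert_iff.1 hi with rfl | ⟨u, hu, rfl⟩
      · rw [dif_pos rfl]; exact zero_mem _
      · rw [dif_neg u.2]
        have : (⟨u.val, u.2⟩ : {w : V // w ≠ v}) = u := Subtype.ext rfl
        rw [this]
        exact yy_mem_PP hu
  · have hiv : i ≠ v := fun h => hi (by rw [h]; exact Set.mem_insert _ _)
    have hjv : j ≠ v := fun h => hj (by rw [h]; exact Set.mem_insert _ _)
    have hiS' : (⟨i, hiv⟩ : {u : V // u ≠ v}) ∈ S'ᶜ :=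
      fun hmem => hi (Set.mem_insert_iff.2 (Or.inr ⟨⟨i, hiv⟩, hmem, rfl⟩))
    have hjS' : (⟨j, hjv⟩ : {u : V // u ≠ v}) ∈ S'ᶜ :=
      fun hmem => hj (Set.mem_insert_iff.2 (Or.inr ⟨⟨j, hjv⟩, hmem, rfl⟩))
    have hkdd : kap k v (dd k i j) = dd k (⟨i, hiv⟩ : {u : V // u ≠ v}) ⟨j, hjv⟩ := by
      rw [dd, map_sub, map_mul, map_mul, kap_xx, kap_yy, kap_xx, kap_yy,
        dif_neg hiv, dif_neg hjv, dif_neg hiv, dif_neg hjv, dd]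
    rw [hkdd]
    refine dd_mem_PP_reach hiS' hjS' (fun h => hne (congrArg Subtype.val h)) ?_
    let F : (G.induce (insert v (Subtype.val '' S'))ᶜ) →g
        ((G.comap (Subtype.val : {u : V // u ≠ v} → V)).induce S'ᶜ) :=
      { toFun := fun x => ⟨⟨x.val, fun h => x.2 (by rw [h]; exact Set.mem_insert _ _)⟩,
          fun hmem => x.2 (Set.mem_insert_iff.2 (Or.inr ⟨_, hmem, rfl⟩))⟩,
        map_rel' := fun h => h }
    exact hr.map F

lemma iot_JJ (v : V) :
    JJ k (G.comap (Subtype.val : {u : V // u ≠ v} → V)) ≤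
      Ideal.comap (iot k v) (JJ k G) := by
  rw [JJ, Ideal.span_le]
  rintro f ⟨u, w, hadj, rfl⟩
  rw [SetLike.mem_coe, Ideal.mem_comap, dd, map_sub, map_mul, map_mul, iot_xx, iot_yy,
    iot_xx, iot_yy]
  exact dd_mem_JJ (hadj : G.Adj u.val w.val)


lemma card_lt_of_inj_missing {A B : Type} [Finite B] (f : A → B)
    (hf : Function.Injective f) (b : B) (hb : ∀ a, f a ≠ b) : Nat.card A < Nat.card B := by
  have : Finite A := Finite.of_injective f hf
  have hg : Function.Injective (Sum.elim f (fun _ : Unit => b)) := by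
    rintro (x | x) (y | y) h
    · rw [hf h]
    · exact absurd h (hb x)
    · exact absurd h.symm (hb y)
    · cases x; cases y; rfl
  have hle := Nat.card_le_card_of_injective _ hg
  rw [Nat.card_sum] at hle
  simp only [Nat.card_unique] at hle
  omega

def mu {V : Type} [Fintype V] (G : SimpleGraph V) : ℕ :=
  Nat.card V + Nat.card {p : V × V // p.1 ≠ p.2 ∧ ¬ G.Adj p.1 p.2}

variable (k) in
theorem main_aux : ∀ (N : ℕ) (V : Type) [Fintype V] (G : SimpleGraph V), mu G ≤ N →
    (⨅ S : Set V, PP k G S) ≤ JJ k G := by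
  intro N
  induction N using Nat.strong_induction_on with
  | _ N ih =>
  intro V _ G hmu f hf
  have hfS : ∀ S : Set V, f ∈ PP k G S := fun S => (Submodule.mem_iInf _).1 hf S
  by_cases hsimp : ∃ v a b : V, a ≠ b ∧ G.Adj v a ∧ G.Adj v b ∧ ¬ G.Adj a b
  swap
  · push_neg at hsimp
    exact PP_empty_le_JJ (fun v a b hne h1 h2 => hsimp v a b hne h1 h2) (hfS ∅)
  obtain ⟨v, a, b, hab, hva, hvb, hnab⟩ := hsimp
  set Gv : SimpleGraph V :=
    { Adj := fun x y => G.Adj x y ∨ (x ≠ y ∧ G.Adj v x ∧ G.Adj v y),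
      symm := by
        refine ⟨?_⟩
        intro x y h
        rcases h with h | ⟨hne, h1, h2⟩
        · exact Or.inl h.symm
        · exact Or.inr ⟨hne.symm, h2, h1⟩,
      loopless := by
        refine ⟨?_⟩
        intro x h
        rcases h with h | ⟨hne, _, _⟩
        · exact G.loopless.irrefl x h
        · exact hne rfl } with hGvdef
  have hGle : G ≤ Gv := by intro x y h; exact Or.inl h
  have hmuGv : mu Gv < mu G := by
    rw [mu, mu]
    have hlt : Nat.card {p : V × V // p.1 ≠ p.2 ∧ ¬ Gv.Adj p.1 p.2} <
        Nat.card {p : V × V // p.1 ≠ p.2 ∧ ¬ G.Adj p.1 p.2} := by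
      refine card_lt_of_inj_missing
        (fun q => ⟨q.val, q.2.1, fun h => q.2.2 (hGle h)⟩) ?_ ⟨(a, b), hab, hnab⟩ ?_
      · intro q q' h
        have h0 := congrArg Subtype.val h
        exact Subtype.ext h0
      · intro q hq
        have hval : q.val = (a, b) := congrArg Subtype.val hq
        exact q.2.2 (show Gv.Adj q.val.1 q.val.2 by
          rw [hval]; exact Or.inr ⟨hab, hva, hvb⟩)
    omega
  have hfGv : f ∈ JJ k Gv := by
    refine ih (mu Gv) (lt_of_lt_of_le hmuGv hmu) V Gv le_rfl ?_
    exact (Submodule.mem_iInf _).2 fun S => PP_mono_graph hGle S (hfS S)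
  -- the vertex-deleted graph
  have hmuGw : mu (G.comap (Subtype.val : {u : V // u ≠ v} → V)) < mu G := by
    rw [mu, mu]
    have h1 : Nat.card {u : V // u ≠ v} < Nat.card V :=
      card_lt_of_inj_missing Subtype.val Subtype.val_injective v (fun a => a.2)
    have h2 : Nat.card {p : {u : V // u ≠ v} × {u : V // u ≠ v} //
        p.1 ≠ p.2 ∧ ¬ (G.comap (Subtype.val : {u : V // u ≠ v} → V)).Adj p.1 p.2} ≤
        Nat.card {p : V × V // p.1 ≠ p.2 ∧ ¬ G.Adj p.1 p.2} := by
      refine Nat.card_le_card_of_injective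
        (fun q => ⟨(q.val.1.val, q.val.2.val),
          fun h => q.2.1 (Subtype.ext h), q.2.2⟩) ?_
      intro q r h
      have h0 := congrArg Subtype.val h
      have h1' := congrArg Prod.fst h0
      have h2' := congrArg Prod.snd h0
      exact Subtype.ext (Prod.ext (Subtype.ext h1') (Subtype.ext h2'))
    omega
  have hkf : kap k v f ∈ JJ k (G.comap (Subtype.val : {u : V // u ≠ v} → V)) := by
    refine ih (mu _) (lt_of_lt_of_le hmuGw hmu) _ _ le_rfl ?_
    refine (Submodule.mem_iInf _).2 fun S' => ?_
    exact Ideal.mem_comap.1 (kap_PP v S' (hfS (insert v (Subtype.val '' S'))))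
  have hpivf : piv k v f ∈ JJ k G := Ideal.mem_comap.1 (iot_JJ v hkf)
  have hfI0 : f ∈ Ideal.span {xx k v, yy k v} ⊔ JJ k G := by
    rw [show f = (f - piv k v f) + piv k v f by ring]
    exact add_mem (Ideal.mem_sup_left (sub_piv_mem v f)) (Ideal.mem_sup_right hpivf)
  have hsplit : JJ k Gv ≤ JJ k G ⊔ DD k G v := by
    rw [JJ, Ideal.span_le]
    rintro g ⟨i, j, hadj, rfl⟩
    rcases hadj with h | ⟨_, h1, h2⟩
    · exact Ideal.mem_sup_left (dd_mem_JJ h)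
    · exact Ideal.mem_sup_right (Ideal.subset_span ⟨i, j, h1, h2, rfl⟩)
  obtain ⟨jg, hjg, d, hd, hfd⟩ := Submodule.mem_sup.1 (hsplit hfGv)
  have hdI0 : d ∈ Ideal.span {xx k v, yy k v} ⊔ JJ k G := by
    rw [show d = f - jg by rw [← hfd]; ring]
    exact sub_mem hfI0 (Ideal.mem_sup_right hjg)
  have hpivd : piv k v d ∈ JJ k G := by
    obtain ⟨p, hp, jg', hjg', hsum⟩ := Submodule.mem_sup.1 hdI0
    rw [show d = p + jg' from hsum.symm, map_add]
    refine add_mem ?_ (piv_JJ hjg')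
    obtain ⟨α, β, hαβ⟩ := Ideal.mem_span_pair.1 hp
    rw [← hαβ, map_add, map_mul, map_mul, piv_xx, piv_yy, if_pos rfl, if_pos rfl,
      mul_zero, mul_zero, add_zero]
    exact zero_mem _
  have hdJJ : d ∈ JJ k G := by
    rw [show d = (d - piv k v d) + piv k v d by ring]
    exact add_mem (pi_DD hd).2 hpivd
  rw [← hfd]
  exact add_mem hjg hdJJ

end Main


section Counting

variable {G : SimpleGraph V}

lemma walk_avoid {A B : Set V} (hAB : A ⊆ B) {w : V} (hwB : w ∈ B)
    (hBA : ∀ x, x ∈ B → x ≠ w → x ∈ A) :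
    ∀ {u v : ↥B} (_p : (G.induce B).Walk u v) (hu : u.val ∈ A) (hv : v.val ∈ A),
      (G.induce A).Reachable ⟨u.val, hu⟩ ⟨v.val, hv⟩ ∨
      (G.induce B).Reachable u ⟨w, hwB⟩ := by
  intro u v p
  induction p with
  | nil =>
    intro hu hv
    left
    exact SimpleGraph.Reachable.refl _
  | @cons x z y hadj q ih =>
    intro hu hv
    by_cases hz : z.val = w
    · right
      exact (SimpleGraph.Adj.reachable (by exact hadj)).trans
        (by rw [show z = ⟨w, hwB⟩ from Subtype.ext hz])
    · have hzA : z.val ∈ A := hBA z.val z.2 hz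
      rcases ih hzA hv with hreach | hreach
      · left
        have hadjA : (G.induce A).Adj ⟨x.val, hu⟩ ⟨z.val, hzA⟩ := hadj
        exact hadjA.reachable.trans hreach
      · right
        exact (SimpleGraph.Adj.reachable (by exact hadj)).trans hreach

variable [Fintype V]

lemma count_lt_of_merge {A B : Set V} (hAB : A ⊆ B) {w : V} (hwB : w ∈ B)
    (hBA : ∀ x, x ∈ B → x ≠ w → x ∈ A) {i j : V} (hi : i ∈ A) (hj : j ∈ A)
    (hnr : ¬ (G.induce A).Reachable ⟨i, hi⟩ ⟨j, hj⟩)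
    (hrB : (G.induce B).Reachable ⟨i, hAB hi⟩ ⟨j, hAB hj⟩) :
    Nat.card (G.induce B).ConnectedComponent < Nat.card (G.induce A).ConnectedComponent := by
  set M : (G.induce A).ConnectedComponent → (G.induce B).ConnectedComponent :=
    SimpleGraph.ConnectedComponent.map (G.induceHomOfLE hAB).toHom with hM
  have hMmk : ∀ (x : V) (hx : x ∈ A),
      M ((G.induce A).connectedComponentMk ⟨x, hx⟩) =
        (G.induce B).connectedComponentMk ⟨x, hAB hx⟩ := by
    intro x hx
    rw [hM, SimpleGraph.ConnectedComponent.map_mk]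
    rfl
  have hMeq : M ((G.induce A).connectedComponentMk ⟨i, hi⟩) =
      M ((G.induce A).connectedComponentMk ⟨j, hj⟩) := by
    rw [hMmk, hMmk]
    exact SimpleGraph.ConnectedComponent.sound hrB
  have hMne : (G.induce A).connectedComponentMk ⟨i, hi⟩ ≠
      (G.induce A).connectedComponentMk ⟨j, hj⟩ :=
    fun h => hnr (SimpleGraph.ConnectedComponent.eq.1 h)
  have hwcomp : (G.induce B).connectedComponentMk ⟨w, hwB⟩ =
      M ((G.induce A).connectedComponentMk ⟨i, hi⟩) := by
    obtain ⟨p⟩ := hrB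
    rcases walk_avoid hAB hwB hBA p hi hj with hre | hre
    · exact absurd hre hnr
    · rw [hMmk]
      exact (SimpleGraph.ConnectedComponent.sound hre).symm
  have hsurj : Function.Surjective M := by
    refine SimpleGraph.ConnectedComponent.ind ?_
    intro x
    by_cases hx : x.val = w
    · refine ⟨(G.induce A).connectedComponentMk ⟨i, hi⟩, ?_⟩
      rw [← hwcomp]
      congr 1
      exact Subtype.ext hx.symm
    · have hxA : x.val ∈ A := hBA x.val x.2 hx
      refine ⟨(G.induce A).connectedComponentMk ⟨x.val, hxA⟩, ?_⟩
      rw [hMmk]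
  by_contra hcon
  push_neg at hcon
  have hbij := hsurj.bijective_of_nat_card_le hcon
  exact hMne (hbij.injective hMeq)

lemma merge_of_count_lt {A B : Set V} (hAB : A ⊆ B)
    (hlt : Nat.card (G.induce B).ConnectedComponent <
      Nat.card (G.induce A).ConnectedComponent) :
    ∃ (i j : V) (hi : i ∈ A) (hj : j ∈ A),
      ¬ (G.induce A).Reachable ⟨i, hi⟩ ⟨j, hj⟩ ∧
      (G.induce B).Reachable ⟨i, hAB hi⟩ ⟨j, hAB hj⟩ := by
  set M : (G.induce A).ConnectedComponent → (G.induce B).ConnectedComponent :=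
    SimpleGraph.ConnectedComponent.map (G.induceHomOfLE hAB).toHom with hM
  have hninj : ¬ Function.Injective M := by
    intro hinj
    exact absurd (Nat.card_le_card_of_injective M hinj) (not_le.2 hlt)
  rw [Function.not_injective_iff] at hninj
  obtain ⟨c₁, c₂, hc, hne⟩ := hninj
  obtain ⟨x, rfl⟩ := c₁.exists_rep
  obtain ⟨y, rfl⟩ := c₂.exists_rep
  refine ⟨x.val, y.val, x.2, y.2, ?_, ?_⟩
  · intro hre
    exact hne (SimpleGraph.ConnectedComponent.sound hre)
  · have h1 : M ((G.induce A).connectedComponentMk x) =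
        (G.induce B).connectedComponentMk ⟨x.val, hAB x.2⟩ := by
      rw [hM, SimpleGraph.ConnectedComponent.map_mk]
      rfl
    have h2 : M ((G.induce A).connectedComponentMk y) =
        (G.induce B).connectedComponentMk ⟨y.val, hAB y.2⟩ := by
      rw [hM, SimpleGraph.ConnectedComponent.map_mk]
      rfl
    have hc' : (G.induce B).connectedComponentMk ⟨x.val, hAB x.2⟩ =
        (G.induce B).connectedComponentMk ⟨y.val, hAB y.2⟩ := by
      rw [← h1, ← h2]; exact hc
    exact SimpleGraph.ConnectedComponent.eq.1 hc'

end Counting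

end BEI
end


namespace BEI

section FinWorld

variable {k : Type} [Field k] {n : ℕ} (G : SimpleGraph (Fin n))

lemma PP_diff_le {S : Set (Fin n)} {w : Fin n} (hw : w ∈ S)
    (hcount : comps G Sᶜ ≤ comps G (S \ {w})ᶜ) :
    PP k G (S \ {w}) ≤ PP k G S := by
  have hAB : Sᶜ ⊆ (S \ {w})ᶜ := fun x hx h => hx h.1
  have hBA : ∀ x, x ∈ (S \ {w})ᶜ → x ≠ w → x ∈ Sᶜ := fun x hxB hxw hxS => hxB ⟨hxS, hxw⟩
  rw [PP, Ideal.span_le]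
  rintro f (⟨i, hi, hf⟩ | ⟨i, j, hi, hj, hne, hr, rfl⟩)
  · rcases hf with rfl | rfl
    · exact xx_mem_PP hi.1
    · exact yy_mem_PP hi.1
  · rcases eq_or_ne i w with rfl | hiw
    · exact dd_mem_PP_left hw
    · rcases eq_or_ne j w with rfl | hjw
      · exact dd_mem_PP_right hw
      · have hiA : i ∈ Sᶜ := hBA i hi hiw
        have hjA : j ∈ Sᶜ := hBA j hj hjw
        have hreach : (G.induce Sᶜ).Reachable ⟨i, hiA⟩ ⟨j, hjA⟩ := by
          by_contra hnr
          exact absurd (count_lt_of_merge hAB (fun h => h.2 rfl) hBA hiA hjA hnr hr)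
            (not_lt.2 hcount)
        exact dd_mem_PP_reach hiA hjA hne hreach

lemma exists_cut : ∀ (m : ℕ) (S : Set (Fin n)), S.ncard ≤ m →
    ∃ T ∈ cutSets G, PP k G T ≤ PP k G S := by
  intro m
  induction m with
  | zero =>
    intro S hS
    have : S = ∅ := by
      have := Set.ncard_eq_zero (Set.toFinite S) |>.1 (Nat.le_zero.1 hS)
      exact this
    exact ⟨S, Or.inl this, le_rfl⟩
  | succ m ihm =>
    intro S hS
    by_cases hSc : S ∈ cutSets G
    · exact ⟨S, hSc, le_rfl⟩
    · have hSc' : ¬ (S = ∅ ∨ ∀ w ∈ S, comps G (S \ {w})ᶜ < comps G Sᶜ) := hSc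
      push_neg at hSc'
      obtain ⟨hne, w, hw, hcount⟩ := hSc'
      have hlt : (S \ {w}).ncard ≤ m := by
        have := Set.ncard_diff_singleton_add_one hw (Set.toFinite S)
        omega
      obtain ⟨T, hT, hle⟩ := ihm (S \ {w}) hlt
      exact ⟨T, hT, hle.trans (PP_diff_le G hw hcount)⟩

lemma cut_merge {S : Set (Fin n)} (hS : S ∈ cutSets G) {w : Fin n} (hw : w ∈ S) :
    comps G (S \ {w})ᶜ < comps G Sᶜ := by
  rcases hS with rfl | hall
  · exact absurd hw (Set.notMem_empty w)
  · exact hall w hw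

lemma PP_not_le {S T : Set (Fin n)} (hS : S ∈ cutSets G) (hT : T ∈ cutSets G)
    (hne : T ≠ S) : ¬ (PP k G T ≤ PP k G S) := by
  intro hle
  have hTS : T ⊆ S := by
    intro i hi
    by_contra hnS
    exact xx_not_mem_PP G S hnS (hle (xx_mem_PP hi))
  obtain ⟨w, hwS, hwT⟩ : ∃ w, w ∈ S ∧ w ∉ T := by
    by_contra hcon
    push_neg at hcon
    exact hne (Set.Subset.antisymm hTS hcon)
  have hcount := cut_merge G hS hwS
  have hAB : Sᶜ ⊆ (S \ {w})ᶜ := fun x hx h => hx h.1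
  obtain ⟨i, j, hiA, hjA, hnr, hrB⟩ := merge_of_count_lt hAB hcount
  have hij : i ≠ j := by
    rintro rfl
    exact hnr (SimpleGraph.Reachable.refl _)
  have hBT : (S \ {w})ᶜ ⊆ Tᶜ := by
    intro x hx hxT
    exact hx ⟨hTS hxT, fun h => hwT (h ▸ hxT)⟩
  have hiT : i ∈ Tᶜ := hBT (hAB hiA)
  have hjT : j ∈ Tᶜ := hBT (hAB hjA)
  have hrT : (G.induce Tᶜ).Reachable ⟨i, hiT⟩ ⟨j, hjT⟩ :=
    reach_mono_sets hBT (hAB hiA) (hAB hjA) hrB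
  have h1 : dd k i j ∈ PP k G T := dd_mem_PP_reach hiT hjT hij hrT
  exact dd_not_mem_PP G S hiA hjA hij hnr (hle h1)

end FinWorld

end BEI

/-- `J(G) = ⋂_{S ∈ C(G)} P_S(G)` is the minimal primary decomposition of
the binomial edge ideal: each `P_S(G)` is prime, they are pairwise distinct, the
decomposition is irredundant, and in particular `J(G)` is radical. -/
theorem JG_primary_decomposition (k : Type) [Field k] (n : ℕ) (G : SimpleGraph (Fin n)) :
    (JG k n G = ⨅ S ∈ cutSets G, PS k n G S) ∧
    (∀ S ∈ cutSets G, (PS k n G S).IsPrime) ∧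
    (∀ S ∈ cutSets G, ∀ T ∈ cutSets G, S ≠ T → PS k n G S ≠ PS k n G T) ∧
    (∀ S ∈ cutSets G, JG k n G ≠ ⨅ T ∈ cutSets G \ {S}, PS k n G T) ∧
    (JG k n G).IsRadical := by
  classical
  have hprime : ∀ S ∈ cutSets G, (PS k n G S).IsPrime := fun S _ =>
    (BEI.PP_isPrime (k := k) G S : (PS k n G S).IsPrime)
  have heq1 : JG k n G = ⨅ S ∈ cutSets G, PS k n G S := by
    apply le_antisymm
    · exact le_iInf₂ fun S _ => (BEI.JJ_le_PP (k := k) G S : JG k n G ≤ PS k n G S)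
    · have hstep : (⨅ S ∈ cutSets G, PS k n G S) ≤ ⨅ S : Set (Fin n), BEI.PP k G S := by
        refine le_iInf fun S => ?_
        obtain ⟨T, hT, hle⟩ := BEI.exists_cut (k := k) G (S.ncard) S le_rfl
        exact le_trans (iInf₂_le T hT) hle
      exact le_trans hstep (BEI.main_aux k (BEI.mu G) (Fin n) G le_rfl)
  refine ⟨heq1, hprime, ?_, ?_, ?_⟩
  · intro S hS T hT hST hPeq
    have hsym : ∃ i, (i ∈ S ∧ i ∉ T) ∨ (i ∈ T ∧ i ∉ S) := by
      by_contra hcon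
      push_neg at hcon
      apply hST
      ext i
      constructor
      · intro hi
        by_contra hiT
        exact hiT ((hcon i).1 hi)
      · intro hi
        by_contra hiS
        exact hiS ((hcon i).2 hi)
    obtain ⟨i, hi | hi⟩ := hsym
    · have h1 : BEI.xx k i ∈ PS k n G S := BEI.xx_mem_PP hi.1
      rw [hPeq] at h1
      exact BEI.xx_not_mem_PP G T hi.2 h1
    · have h1 : BEI.xx k i ∈ PS k n G T := BEI.xx_mem_PP hi.1
      rw [← hPeq] at h1
      exact BEI.xx_not_mem_PP G S hi.2 h1
  · intro S hS heq
    have hfin : (cutSets G \ {S}).Finite := Set.toFinite _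
    have hFinf : hfin.toFinset.inf (fun T => PS k n G T) ≤ PS k n G S := by
      rw [Finset.inf_eq_iInf]
      have hconv : (⨅ T ∈ hfin.toFinset, PS k n G T) =
          ⨅ T ∈ cutSets G \ {S}, PS k n G T := by
        apply le_antisymm
        · exact le_iInf₂ fun T hT => iInf₂_le T ((Set.Finite.mem_toFinset _).2 hT)
        · exact le_iInf₂ fun T hT => iInf₂_le T ((Set.Finite.mem_toFinset _).1 hT)
      rw [hconv, ← heq]
      exact (BEI.JJ_le_PP (k := k) G S : JG k n G ≤ PS k n G S)
    obtain ⟨T, hTFs, hTle⟩ := ((hprime S hS).inf_le').1 hFinf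
    have hT' := (Set.Finite.mem_toFinset _).1 hTFs
    exact BEI.PP_not_le G hS hT'.1 hT'.2 hTle
  · rw [heq1]
    refine le_iInf₂ fun S hS => ?_
    exact le_trans (Ideal.radical_mono (iInf₂_le S hS)) (le_of_eq (hprime S hS).radical)
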